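/- arXiv:1807.02904 — 2 statements merged into one kernel-verified Lean document; each statement's English description precedes it below -/
import Mathlib

section
/- Fix w ∈ Sₙ and let v ↦ v' be the greedy operation associated to w. Then for every v ∈ Sₙ one has v' ≤_R v in the right weak order. -/
namespace SchubertToric

open Equiv

/-- The number of inversions (= the length `ℓ`) of a permutation. -/
def invCount {n : ℕ} (w : Equiv.Perm (Fin n)) : ℕ :=
  ((Finset.univ : Finset (Fin n × Fin n)).filter fun p => p.1 < p.2 ∧ w p.2 < w p.1).card

/-- `initSeg w d` is the set `{w(1), …, w(d)}` (0-indexed: images of the first `d` indices). -/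
def initSeg {n : ℕ} (w : Equiv.Perm (Fin n)) (d : ℕ) : Finset (Fin n) :=
  (Finset.univ.filter fun i : Fin n => (i : ℕ) < d).image w

/-- `domLE S T`: the increasing rearrangement of `S` is componentwise ≤ that of `T`. -/
def domLE {n : ℕ} (S T : Finset (Fin n)) : Prop :=
  List.Forall₂ (· ≤ ·) (S.sort (· ≤ ·)) (T.sort (· ≤ ·))

/-- Bruhat order on `
Sₙ`, via the tableau criterion. -/
def bruhatLE {n : ℕ} (v w : Equiv.Perm (Fin n)) : Prop :=
  ∀ d : ℕ, domLE (initSeg v d) (initSeg w d)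

/-- `GreedyRel w v vp` says that `vp = v'`, the result of the greedy operation associated
to `w`: there is a sequence of indices `idx 0, idx 1, …`, each chosen as the *least* index
not previously chosen such that the increasing rearrangement of the previously chosen values
together with the new value is componentwise at most `{w(1),…,w(d)}`, and `vp d = v (idx d)`. -/
def GreedyRel {n : ℕ} (w v vp : Equiv.Perm (Fin n)) : Prop :=
  ∃ idx : Fin n → Fin n,
    (∀ d : Fin n, vp d = v (idx d)) ∧
    ∀ d : Fin n,
      IsLeast {i : Fin n |
        (∀ e : Fin n, e < d → idx e ≠ i) ∧
        domLE (insert (v i)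
            ((Finset.univ.filter fun e : Fin n => e < d).image fun e => v (idx e)))
          (initSeg w ((d : ℕ) + 1))}
        (idx d)

/-- Right weak order: `rightWeakLE u v` iff `v = u·s_{i₁}⋯s_{i_k}` with
`ℓ(u·s_{i₁}⋯s_{i_j}) = ℓ(u) + j` for all `0 ≤ j ≤ k`. -/
def rightWeakLE {n : ℕ} (u v : Equiv.Perm (Fin n)) : Prop :=
  ∃ L : List (Equiv.Perm (Fin n)),
    (∀ s ∈ L, ∃ (i : Fin n) (h : (i : ℕ) + 1 < n), s = Equiv.swap i ⟨(i : ℕ) + 1, h⟩) ∧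
    v = u * L.prod ∧
    ∀ k ≤ L.length, invCount (u * (L.take k).prod) = invCount u + k

/-- `Ref(w) = {(w(i),w(j)) : i < j, ℓ(w) − ℓ(t_{w(i),w(j)}·w) = 1}`. -/
def RefSet {n : ℕ} (w : Equiv.Perm (Fin n)) : Set (Fin n × Fin n) :=
  {p | ∃ i j : Fin n, i < j ∧ p = (w i, w j) ∧
    invCount (Equiv.swap (w i) (w j) * w) + 1 = invCount w}

/-- The (undirected) graph `Γ_w` on `Fin n` whose edges are the pairs in `Ref(w)`. -/
def refGraph {n : ℕ} (w : Equiv.Perm (Fin n)) : SimpleGraph (Fin n) :=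
  SimpleGraph.fromRel fun a b => (a, b) ∈ RefSet w

/-- The vertices of `Γ_w`: the integers occurring in pairs of `Ref(w)`. -/
def refVerts {n : ℕ} (w : Equiv.Perm (Fin n)) : Set (Fin n) :=
  {a | ∃ b, (a, b) ∈ RefSet w ∨ (b, a) ∈ RefSet w}

/-- The cone `C(v) = {x ∈ ℝⁿ : x_{v(1)} ≤ x_{v(2)} ≤ ⋯ ≤ x_{v(n)}}`. -/
def coneC {n : ℕ} (v : Equiv.Perm (Fin n)) : Set (Fin n → ℝ) :=
  {x | ∀ i j : Fin n, i ≤ j → x (v i) ≤ x (v j)}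

/-- `Ẽ_w(u) = {(u(i),u(j)) : i < j, t_{u(i),u(j)}·u ≤ w, |ℓ(u) − ℓ(t_{u(i),u(j)}·u)| = 1}`. -/
def Etil {n : ℕ} (w u : Equiv.Perm (Fin n)) : Set (Fin n × Fin n) :=
  {p | ∃ i j : Fin n, i < j ∧ p = (u i, u j) ∧
    bruhatLE (Equiv.swap (u i) (u j) * u) w ∧
    (invCount (Equiv.swap (u i) (u j) * u) + 1 = invCount u ∨
      invCount u + 1 = invCount (Equiv.swap (u i) (u j) * u))}

/-- An element `p = (a,b)` of `Ẽ_w(u)` is decomposable if it is a sum (under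
`(a,b)+(b,c) = (a,c)`) of two or more other elements of `Ẽ_w(u)`. -/
def Decomposable {n : ℕ} (w u : Equiv.Perm (Fin n)) (p : Fin n × Fin n) : Prop :=
  ∃ (m : ℕ) (c : ℕ → Fin n), 2 ≤ m ∧ c 0 = p.1 ∧ c m = p.2 ∧
    ∀ i < m, (c i, c (i + 1)) ∈ Etil w u ∧ (c i, c (i + 1)) ≠ p

/-- `E_w(u)`: the indecomposable elements of `Ẽ_w(u)`. -/
def Ew {n : ℕ} (w u : Equiv.Perm (Fin n)) : Set (Fin n × Fin n) :=
  {p | p ∈ Etil w u ∧ ¬ Decomposable w u p}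

/-- The longest element `w₀ = n(n−1)⋯21` of `Sₙ`. -/
def w0 {n : ℕ} : Equiv.Perm (Fin n) :=
  Function.Involutive.toPerm Fin.rev Fin.rev_rev



section lists
variable {α : Type*} [LinearOrder α]

lemma forall2_le_trans : ∀ {l1 l2 l3 : List α}, List.Forall₂ (· ≤ ·) l1 l2 →
    List.Forall₂ (· ≤ ·) l2 l3 → List.Forall₂ (· ≤ ·) l1 l3 := by
  intro l1 l2 l3 h12
  induction h12 generalizing l3 with
  | nil => intro h; cases h; exact List.Forall₂.nil
  | cons hab _ ih =>
    intro h; cases h with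
    | cons hbc htl => exact List.Forall₂.cons (le_trans hab hbc) (ih htl)

lemma forall2_cons_orderedInsert : ∀ (t : List α) (h x : α),
    List.Pairwise (· ≤ ·) (h :: t) → h ≤ x →
    List.Forall₂ (· ≤ ·) (h :: t) (List.orderedInsert (· ≤ ·) x t) := by
  intro t
  induction t with
  | nil => intro h x _ hx; exact List.Forall₂.cons hx List.Forall₂.nil
  | cons a t' ih =>
    intro h x hs hx
    by_cases hxa : x ≤ a
    · simp only [List.orderedInsert, if_pos hxa]
      exact List.Forall₂.cons hx (List.forall₂_refl _)
    · simp only [List.orderedInsert, if_neg hxa]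
      refine List.Forall₂.cons ((List.pairwise_cons.mp hs).1 a (by simp)) ?_
      exact ih a x hs.of_cons (le_of_not_ge hxa)

lemma orderedInsert_mono : ∀ (l : List α), List.Pairwise (· ≤ ·) l → ∀ {x' x : α}, x' ≤ x →
    List.Forall₂ (· ≤ ·) (List.orderedInsert (· ≤ ·) x' l) (List.orderedInsert (· ≤ ·) x l) := by
  intro l
  induction l with
  | nil => intro _ x' x hx; exact List.Forall₂.cons hx List.Forall₂.nil
  | cons h t ih =>
    intro hs x' x hx
    by_cases hx'h : x' ≤ h
    · simp only [List.orderedInsert, if_pos hx'h]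
      by_cases hxh : x ≤ h
      · simp only [if_pos hxh]
        exact List.Forall₂.cons hx (List.forall₂_refl _)
      · simp only [if_neg hxh]
        exact List.Forall₂.cons hx'h (forall2_cons_orderedInsert t h x hs (le_of_not_ge hxh))
    · have hxh : ¬ x ≤ h := fun hc => hx'h (le_trans hx hc)
      simp only [List.orderedInsert, if_neg hx'h, if_neg hxh]
      exact List.Forall₂.cons le_rfl (ih hs.of_cons hx)

lemma sort_insert_of_not_mem [DecidableEq α] {a : α} {S : Finset α} (h : a ∉ S) :
    (insert a S).sort (· ≤ ·) = List.orderedInsert (· ≤ ·) a (S.sort (· ≤ ·)) := by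
  apply List.Perm.eq_of_pairwise' (by simp)
    (List.Pairwise.orderedInsert a _ (by simp))
  have h1 : ((insert a S).sort (· ≤ ·) : Multiset α) = (a ::ₘ S.1) := by
    rw [Finset.sort_eq, Finset.insert_val_of_notMem h]
  have h2 : (S.sort (· ≤ ·) : Multiset α) = S.1 := Finset.sort_eq _ _
  have : ((insert a S).sort (· ≤ ·) : Multiset α) = ((a :: S.sort (· ≤ ·) : List α) : Multiset α) := by
    rw [h1, ← h2]; rfl
  exact (Multiset.coe_eq_coe.mp this).trans (List.perm_orderedInsert _ _ _).symm

end lists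

lemma domLE_insert_mono {n : ℕ} {a b : Fin n} {S T : Finset (Fin n)} (hab : a ≤ b)
    (ha : a ∉ S) (hb : b ∉ S)
    (h : List.Forall₂ (· ≤ ·) ((insert b S).sort (· ≤ ·)) (T.sort (· ≤ ·))) :
    List.Forall₂ (· ≤ ·) ((insert a S).sort (· ≤ ·)) (T.sort (· ≤ ·)) := by
  rw [sort_insert_of_not_mem hb] at h
  rw [sort_insert_of_not_mem ha]
  exact forall2_le_trans (orderedInsert_mono _ (by simp) hab) h


lemma swap_adj_lt {n : ℕ} {i j p q : Fin n} (hij : (j : ℕ) = (i : ℕ) + 1) (hpq : p < q)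
    (hne : ¬(p = i ∧ q = j)) : Equiv.swap i j p < Equiv.swap i j q := by
  have hij' : i < j := Fin.lt_def.mpr (by omega)
  rcases eq_or_ne p i with rfl | hpi
  · have hqj : q ≠ j := fun h => hne ⟨rfl, h⟩
    have hqi : q ≠ p := ne_of_gt hpq
    rw [Equiv.swap_apply_left, Equiv.swap_apply_of_ne_of_ne hqi hqj]
    have h1 : (p : ℕ) < q := hpq
    have h2 : (q : ℕ) ≠ j := fun h => hqj (Fin.ext h)
    exact Fin.lt_def.mpr (by omega)
  · rcases eq_or_ne p j with rfl | hpj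
    · have hqi : q ≠ i := ne_of_gt (lt_trans hij' hpq)
      have hqj : q ≠ p := ne_of_gt hpq
      rw [Equiv.swap_apply_right, Equiv.swap_apply_of_ne_of_ne hqi hqj]
      exact lt_trans hij' hpq
    · rw [Equiv.swap_apply_of_ne_of_ne hpi hpj]
      rcases eq_or_ne q i with rfl | hqi
      · rw [Equiv.swap_apply_left]
        exact lt_trans hpq hij'
      · rcases eq_or_ne q j with rfl | hqj
        · rw [Equiv.swap_apply_right]
          have h1 : (p : ℕ) < q := hpq
          have h2 : (p : ℕ) ≠ i := fun h => hpi (Fin.ext h)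
          exact Fin.lt_def.mpr (by omega)
        · rw [Equiv.swap_apply_of_ne_of_ne hqi hqj]; exact hpq

lemma invCount_mul_swap {n : ℕ} (u : Equiv.Perm (Fin n)) {i j : Fin n}
    (hij : (j : ℕ) = (i : ℕ) + 1) (h : u i < u j) :
    invCount (u * Equiv.swap i j) = invCount u + 1 := by
  classical
  set s := Equiv.swap i j with hs
  have hss : ∀ x : Fin n, s (s x) = x := fun x => Equiv.swap_apply_self i j x
  have hkey : ((Finset.univ : Finset (Fin n × Fin n)).filter
        fun p => p.1 < p.2 ∧ (u * s) p.2 < (u * s) p.1)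
      = insert (i, j) (Finset.map (Equiv.prodCongr s s).toEmbedding
          ((Finset.univ : Finset (Fin n × Fin n)).filter
            fun p => p.1 < p.2 ∧ u p.2 < u p.1)) := by
    ext ⟨p, q⟩
    rw [Finset.mem_filter]
    simp only [Finset.mem_coe, Finset.mem_filter, Finset.mem_univ, true_and, Finset.mem_insert,
      Finset.mem_map, Equiv.toEmbedding_apply, Equiv.prodCongr_apply, Prod.map, Prod.exists,
      Prod.mk.injEq, Equiv.Perm.mul_apply]
    constructor
    · rintro ⟨hpq, hv⟩
      by_cases hc : p = i ∧ q = j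
      · exact Or.inl ⟨hc.1, hc.2⟩
      · exact Or.inr ⟨s p, s q, ⟨swap_adj_lt hij hpq hc, hv⟩, hss p, hss q⟩
    · rintro (⟨rfl, rfl⟩ | ⟨a, b, ⟨hab, hv⟩, hsa, hsb⟩)
      · refine ⟨Fin.lt_def.mpr (by omega), ?_⟩
        rw [hs, Equiv.swap_apply_left, Equiv.swap_apply_right]
        exact h
      · subst hsa hsb
        have hne : ¬(a = i ∧ b = j) := by
          rintro ⟨rfl, rfl⟩; exact absurd hv (not_lt.mpr h.le)
        exact ⟨swap_adj_lt hij hab hne, by rwa [hss, hss]⟩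
  have hnotmem : (i, j) ∉ Finset.map (Equiv.prodCongr s s).toEmbedding
      ((Finset.univ : Finset (Fin n × Fin n)).filter
        fun p => p.1 < p.2 ∧ u p.2 < u p.1) := by
    simp only [Finset.mem_map, Finset.mem_filter, Finset.mem_univ, true_and,
      Equiv.toEmbedding_apply, Equiv.prodCongr_apply, Prod.map, Prod.exists, Prod.mk.injEq]
    rintro ⟨a, b, ⟨hab, hv⟩, hsa, hsb⟩
    have ha : a = j := by
      have := congrArg s hsa; rwa [hss, hs, Equiv.swap_apply_left] at this
    have hb : b = i := by
      have := congrArg s hsb; rwa [hss, hs, Equiv.swap_apply_right] at this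
    subst ha hb
    exact absurd hab (not_lt.mpr (Fin.le_def.mpr (by omega)))
  unfold invCount
  rw [hkey, Finset.card_insert_of_notMem hnotmem, Finset.card_map]

def Cprop {n : ℕ} (u v : Equiv.Perm (Fin n)) : Prop :=
  ∀ a b : Fin n, a < b → u⁻¹ b < u⁻¹ a → v⁻¹ b < v⁻¹ a

lemma Cprop.invCount_le {n : ℕ} {u v : Equiv.Perm (Fin n)} (h : Cprop u v) :
    invCount u ≤ invCount v := by
  apply Finset.card_le_card_of_injOn (fun p => (v⁻¹ (u p.1), v⁻¹ (u p.2)))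
  · rintro ⟨p, q⟩ hp
    simp only [Finset.mem_coe, Finset.mem_filter, Finset.mem_univ, true_and] at hp ⊢
    obtain ⟨hpq, hv⟩ := hp
    refine ⟨?_, ?_⟩
    · have := h (u q) (u p) hv (by simpa using hpq)
      simpa using this
    · simp only [Equiv.Perm.coe_inv, Equiv.apply_symm_apply]
      exact hv
  · rintro ⟨p, q⟩ _ ⟨p', q'⟩ _ hpq
    simp only [Prod.mk.injEq] at hpq
    exact Prod.ext (u.injective (v⁻¹.injective hpq.1)) (u.injective (v⁻¹.injective hpq.2))

lemma Cprop.mul_swap {n : ℕ} {u v : Equiv.Perm (Fin n)} {i j : Fin n}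
    (hij : (j : ℕ) = (i : ℕ) + 1) (hc : Cprop u v) (hchoice : v⁻¹ (u j) < v⁻¹ (u i)) :
    Cprop (u * Equiv.swap i j) v := by
  intro a b hab hba
  have hinv : ∀ x, (u * Equiv.swap i j)⁻¹ x = Equiv.swap i j (u⁻¹ x) := by
    intro x
    rw [mul_inv_rev, Equiv.Perm.mul_apply, Equiv.swap_inv]
  rw [hinv, hinv] at hba
  rcases lt_trichotomy (u⁻¹ b) (u⁻¹ a) with hlt | heq | hgt
  · exact hc a b hab hlt
  · exact absurd (u⁻¹.injective heq) hab.ne'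
  · by_cases hcase : u⁻¹ a = i ∧ u⁻¹ b = j
    · have ha : a = u i := by rw [← hcase.1, Equiv.Perm.coe_inv, Equiv.apply_symm_apply]
      have hb : b = u j := by rw [← hcase.2, Equiv.Perm.coe_inv, Equiv.apply_symm_apply]
      rw [ha, hb]; exact hchoice
    · exact absurd (swap_adj_lt hij hgt hcase) (not_lt.mpr hba.le)

lemma perm_eq_one_of_adj {n : ℕ} (g : Equiv.Perm (Fin n))
    (h : ∀ (k : ℕ) (hk : k + 1 < n), g ⟨k, Nat.lt_of_succ_lt hk⟩ < g ⟨k + 1, hk⟩) :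
    g = 1 := by
  have key : ∀ (d : ℕ) (p q : Fin n), (q : ℕ) = (p : ℕ) + d + 1 → g p < g q := by
    intro d
    induction d with
    | zero =>
      intro p q hq
      have hk : (p : ℕ) + 1 < n := hq ▸ q.isLt
      have := h (p : ℕ) hk
      have e1 : (⟨(p : ℕ), Nat.lt_of_succ_lt hk⟩ : Fin n) = p := Fin.ext rfl
      have e2 : (⟨(p : ℕ) + 1, hk⟩ : Fin n) = q := Fin.ext (show (p : ℕ) + 1 = (q : ℕ) by omega)
      rwa [e1, e2] at this
    | succ d ih =>
      intro p q hq
      have hm : (p : ℕ) + d + 1 + 1 < n := hq ▸ q.isLt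
      have h1 := ih p ⟨(p : ℕ) + d + 1, Nat.lt_of_succ_lt hm⟩ rfl
      have h2 := h ((p : ℕ) + d + 1) hm
      have e2 : (⟨(p : ℕ) + d + 1 + 1, hm⟩ : Fin n) = q := Fin.ext (show (p : ℕ) + d + 1 + 1 = (q : ℕ) by omega)
      rw [e2] at h2
      exact lt_trans h1 h2
  have hsm : StrictMono (g : Fin n → Fin n) := by
    intro p q hpq
    have hq : (q : ℕ) = (p : ℕ) + ((q : ℕ) - (p : ℕ) - 1) + 1 := by
      have : (p : ℕ) < q := hpq
      omega
    exact key _ p q hq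
  have hsm' : StrictMono (⇑g⁻¹ : Fin n → Fin n) := by
    intro a b hab
    rcases lt_or_ge (g⁻¹ a) (g⁻¹ b) with h' | h'
    · exact h'
    · exfalso
      have hmono := hsm.monotone h'
      simp only [Equiv.Perm.coe_inv, Equiv.apply_symm_apply] at hmono
      exact absurd hab (not_lt.mpr hmono)
  haveI : WellFoundedLT (Fin n) := inferInstance
  refine Equiv.ext fun x => ?_
  rw [Equiv.Perm.one_apply]
  refine le_antisymm ?_ hsm.le_apply
  have h1 : g x ≤ g⁻¹ (g x) := hsm'.le_apply
  rwa [Equiv.Perm.coe_inv, Equiv.symm_apply_apply] at h1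

lemma exists_ascent {n : ℕ} {u v : Equiv.Perm (Fin n)} (hc : Cprop u v) (hne : u ≠ v) :
    ∃ (k : ℕ) (hk : k + 1 < n),
      u ⟨k, Nat.lt_of_succ_lt hk⟩ < u ⟨k + 1, hk⟩ ∧
      v⁻¹ (u ⟨k + 1, hk⟩) < v⁻¹ (u ⟨k, Nat.lt_of_succ_lt hk⟩) := by
  by_contra hcon
  push_neg at hcon
  apply hne
  have hadj : ∀ (k : ℕ) (hk : k + 1 < n),
      (v⁻¹ * u) ⟨k, Nat.lt_of_succ_lt hk⟩ < (v⁻¹ * u) ⟨k + 1, hk⟩ := by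
    intro k hk
    set p : Fin n := ⟨k, Nat.lt_of_succ_lt hk⟩
    set q : Fin n := ⟨k + 1, hk⟩
    have hpq : p < q := Fin.lt_def.mpr (show (k : ℕ) < k + 1 by omega)
    simp only [Equiv.Perm.mul_apply]
    rcases lt_trichotomy (u p) (u q) with hlt | heq | hgt
    · have hle := hcon k hk hlt
      have hneq : v⁻¹ (u p) ≠ v⁻¹ (u q) := fun hcontra =>
        (hpq.ne (u.injective (v⁻¹.injective hcontra)))
      exact lt_of_le_of_ne hle hneq
    · exact absurd (u.injective heq) hpq.ne
    · have := hc (u q) (u p) hgt (by simpa using hpq)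
      simpa using this
  have := perm_eq_one_of_adj (v⁻¹ * u) hadj
  have : u = v * 1 := by rw [← this, mul_inv_cancel_left]
  simpa using this

lemma rightWeakLE_refl {n : ℕ} (u : Equiv.Perm (Fin n)) : rightWeakLE u u := by
  refine ⟨[], by simp, by simp, ?_⟩
  intro k hk
  simp only [List.length_nil, Nat.le_zero] at hk
  subst hk
  simp

lemma rightWeakLE_of_cprop_aux {n : ℕ} :
    ∀ (m : ℕ) (u v : Equiv.Perm (Fin n)), invCount v ≤ invCount u + m →
      Cprop u v → rightWeakLE u v := by
  intro m
  induction m with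
  | zero =>
    intro u v hm hc
    rcases eq_or_ne u v with rfl | hne
    · exact rightWeakLE_refl u
    · exfalso
      obtain ⟨k, hk, hasc, hch⟩ := exists_ascent hc hne
      have h1 := invCount_mul_swap u (i := ⟨k, Nat.lt_of_succ_lt hk⟩) (j := ⟨k + 1, hk⟩) rfl hasc
      have h2 := (hc.mul_swap (i := ⟨k, Nat.lt_of_succ_lt hk⟩) (j := ⟨k + 1, hk⟩) rfl hch).invCount_le
      omega
  | succ m ih =>
    intro u v hm hc
    rcases eq_or_ne u v with rfl | hne
    · exact rightWeakLE_refl u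
    · obtain ⟨k, hk, hasc, hch⟩ := exists_ascent hc hne
      have hij : ((⟨k + 1, hk⟩ : Fin n) : ℕ) = ((⟨k, Nat.lt_of_succ_lt hk⟩ : Fin n) : ℕ) + 1 := rfl
      have hc' : Cprop (u * Equiv.swap ⟨k, Nat.lt_of_succ_lt hk⟩ ⟨k + 1, hk⟩) v :=
        hc.mul_swap hij hch
      have h1 := invCount_mul_swap u hij hasc
      obtain ⟨L, hLmem, hLprod, hLlen⟩ :=
        ih (u * Equiv.swap ⟨k, Nat.lt_of_succ_lt hk⟩ ⟨k + 1, hk⟩) v (by omega) hc'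
      refine ⟨Equiv.swap ⟨k, Nat.lt_of_succ_lt hk⟩ ⟨k + 1, hk⟩ :: L, ?_, ?_, ?_⟩
      · intro s hs
        rw [List.mem_cons] at hs
        rcases hs with rfl | hs
        · exact ⟨⟨k, Nat.lt_of_succ_lt hk⟩, hk, rfl⟩
        · exact hLmem s hs
      · rw [List.prod_cons, ← mul_assoc, ← hLprod]
      · intro kk hkk
        cases kk with
        | zero => simp
        | succ kk' =>
          rw [List.take_succ_cons, List.prod_cons, ← mul_assoc,
            hLlen kk' (by simpa using hkk), h1]
          omega


/-- For every `v ∈ Sₙ`, one has `v' ≤_R v` in the right weak order. -/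
theorem greedy_rightWeak_le {n : ℕ} (w v vp : Equiv.Perm (Fin n))
    (h : GreedyRel w v vp) : rightWeakLE vp v := by
  obtain ⟨idx, hvp, hleast⟩ := h
  have hC : Cprop vp v := by
    intro a b hab hpos
    set p := vp⁻¹ a with hp
    set q := vp⁻¹ b with hq
    have hva : v (idx p) = a := by rw [← hvp p]; exact vp.apply_symm_apply a
    have hvb : v (idx q) = b := by rw [← hvp q]; exact vp.apply_symm_apply b
    have hqp : q < p := hpos
    have h1 : ∀ e : Fin n, e < q → idx e ≠ idx p :=
      fun e he => (hleast p).1.1 e (lt_trans he hqp)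
    have hSa : v (idx p) ∉ (Finset.univ.filter fun e : Fin n => e < q).image
        fun e => v (idx e) := by
      intro hmem
      simp only [Finset.mem_image, Finset.mem_filter, Finset.mem_univ, true_and] at hmem
      obtain ⟨e, he, heq⟩ := hmem
      exact h1 e he (v.injective heq)
    have hSb : v (idx q) ∉ (Finset.univ.filter fun e : Fin n => e < q).image
        fun e => v (idx e) := by
      intro hmem
      simp only [Finset.mem_image, Finset.mem_filter, Finset.mem_univ, true_and] at hmem
      obtain ⟨e, he, heq⟩ := hmem
      exact (hleast q).1.1 e he (v.injective heq)
    have hle' : v (idx p) ≤ v (idx q) := by rw [hva, hvb]; exact hab.le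
    have h2 : domLE (insert (v (idx p))
        ((Finset.univ.filter fun e : Fin n => e < q).image fun e => v (idx e)))
        (initSeg w ((q : ℕ) + 1)) :=
      domLE_insert_mono hle' hSa hSb ((hleast q).1.2)
    have hle : idx q ≤ idx p := (hleast q).2 ⟨h1, h2⟩
    have hne : idx q ≠ idx p := by
      intro hcontra
      have : b = a := by rw [← hvb, ← hva, hcontra]
      exact absurd this hab.ne'
    have e1 : v⁻¹ b = idx q := by rw [← hvb, Equiv.Perm.coe_inv, Equiv.symm_apply_apply]
    have e2 : v⁻¹ a = idx p := by rw [← hva, Equiv.Perm.coe_inv, Equiv.symm_apply_apply]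
    rw [e1, e2]
    exact lt_of_le_of_ne hle hne
  exact rightWeakLE_of_cprop_aux (invCount v) vp v (by omega) hC

end SchubertToric
end

section
/- Fix w ∈ Sₙ, let v ↦ v' be the greedy operation associated to w, and let v ∈ Sₙ satisfy v' ≠ w. Then there exist indices q < p such that (v(p), v(q)) ∈ Ref(w). Consequently C(v) is not contained in {x ∈ ℝⁿ : x_b ≥ x_a for all (a,b) ∈ Ref(w)}. -/
namespace SchubertToric

open Equiv

section Aux

variable {n : ℕ}

private lemma forall₂_sum_le {l₁ l₂ : List (Fin n)} (h : List.Forall₂ (· ≤ ·) l₁ l₂) :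
    (l₁.map Fin.val).sum ≤ (l₂.map Fin.val).sum := by
  induction h with
  | nil => simp
  | cons h _ ih => simpa using Nat.add_le_add h ih

private lemma sort_val_sum (S : Finset (Fin n)) :
    ((S.sort (· ≤ ·)).map Fin.val).sum = ∑ x ∈ S, (x : ℕ) := by
  rw [((Finset.sort_perm_toList (s := S) (r := (· ≤ ·))).map Fin.val).sum_eq]
  exact Finset.sum_map_toList S _

private lemma domLE_refl (S : Finset (Fin n)) : domLE S S :=
  List.forall₂_same.mpr fun x _ => le_refl x

private lemma domLE_insert_le {S : Finset (Fin n)} {a b : Fin n} (ha : a ∉ S) (hb : b ∉ S)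
    (h : domLE (insert a S) (insert b S)) : a ≤ b := by
  have hsum := forall₂_sum_le h
  rw [sort_val_sum, sort_val_sum, Finset.sum_insert ha, Finset.sum_insert hb] at hsum
  have : (a : ℕ) ≤ (b : ℕ) := by omega
  exact this

private def Gmap (i j : Fin n) (p : Fin n × Fin n) : Fin n × Fin n :=
  if Equiv.swap i j p.1 < Equiv.swap i j p.2 then (Equiv.swap i j p.1, Equiv.swap i j p.2) else p

private lemma Gmap_main (w : Equiv.Perm (Fin n)) (i j : Fin n) (hij : i < j) (hw : w j < w i)
    (hmid : ∀ k, i < k → k < j → ¬(w j < w k ∧ w k < w i)) (p q : Fin n) (hpq : p < q)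
    (hne : (p, q) ≠ (i, j)) :
    (Gmap i j (p, q)).1 < (Gmap i j (p, q)).2 ∧ Gmap i j (Gmap i j (p, q)) = (p, q) ∧
    Gmap i j (p, q) ≠ (i, j) ∧
    (w q < w p ↔ w (Equiv.swap i j (Gmap i j (p, q)).2) < w (Equiv.swap i j (Gmap i j (p, q)).1)) ∧
    (w (Equiv.swap i j q) < w (Equiv.swap i j p) ↔
      w (Gmap i j (p, q)).2 < w (Gmap i j (p, q)).1) := by
  have hss : ∀ x : Fin n, Equiv.swap i j (Equiv.swap i j x) = x :=
    fun x => Equiv.swap_apply_self i j x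
  have hGpos : ∀ r s : Fin n, Equiv.swap i j r < Equiv.swap i j s →
      Gmap i j (r, s) = (Equiv.swap i j r, Equiv.swap i j s) := fun r s h => if_pos h
  have hGneg : ∀ r s : Fin n, ¬ Equiv.swap i j r < Equiv.swap i j s →
      Gmap i j (r, s) = (r, s) := fun r s h => if_neg h
  by_cases hord : Equiv.swap i j p < Equiv.swap i j q
  · rw [hGpos p q hord]
    refine ⟨hord, ?_, ?_, ?_, Iff.rfl⟩
    · rw [hGpos _ _ (by rw [hss, hss]; exact hpq), hss, hss]
    · intro hcontra
      rw [Prod.mk.injEq] at hcontra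
      have hp : p = j := by
        have := congrArg (Equiv.swap i j) hcontra.1
        rwa [hss, Equiv.swap_apply_left] at this
      have hq : q = i := by
        have := congrArg (Equiv.swap i j) hcontra.2
        rwa [hss, Equiv.swap_apply_right] at this
      rw [hp, hq] at hpq
      exact absurd (hpq.trans hij) (lt_irrefl j)
    · show w q < w p ↔
        w (Equiv.swap i j (Equiv.swap i j q)) < w (Equiv.swap i j (Equiv.swap i j p))
      rw [hss, hss]
  · have hGid := hGneg p q hord
    rw [hGid]
    refine ⟨hpq, hGid, hne, ?_⟩
    have hpq' : p ≠ q := ne_of_lt hpq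
    by_cases hpi : p = i
    · have hqj : q ≠ j := fun h => hne (by rw [hpi, h])
      have hqi : q ≠ i := fun h => hpq' (hpi.trans h.symm)
      have hσp : Equiv.swap i j p = j := by rw [hpi]; exact Equiv.swap_apply_left i j
      have hσq : Equiv.swap i j q = q := Equiv.swap_apply_of_ne_of_ne hqi hqj
      rw [hσp, hσq] at hord
      have hqltj : q < j := lt_of_le_of_ne (not_lt.mp hord) hqj
      have hilq : i < q := hpi ▸ hpq
      have htri := hmid q hilq hqltj
      have hwqj : w q ≠ w j := fun h => hqj (w.injective h)
      have hiff : w q < w p ↔ w q < w j := by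
        rw [hpi]
        constructor
        · intro h
          by_contra h'
          exact htri ⟨lt_of_le_of_ne (not_lt.mp h') (Ne.symm hwqj), h⟩
        · intro h; exact h.trans hw
      constructor
      · show w q < w p ↔ w (Equiv.swap i j q) < w (Equiv.swap i j p)
        rw [hσp, hσq]; exact hiff
      · show w (Equiv.swap i j q) < w (Equiv.swap i j p) ↔ w q < w p
        rw [hσp, hσq]; exact hiff.symm
    · by_cases hqj : q = j
      · have hpj : p ≠ j := fun h => hpq' (h.trans hqj.symm)
        have hσq : Equiv.swap i j q = i := by rw [hqj]; exact Equiv.swap_apply_right i j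
        have hσp : Equiv.swap i j p = p := Equiv.swap_apply_of_ne_of_ne hpi hpj
        rw [hσp, hσq] at hord
        have hiltp : i < p := lt_of_le_of_ne (not_lt.mp hord) (Ne.symm hpi)
        have hpltj : p < j := hqj ▸ hpq
        have htri := hmid p hiltp hpltj
        have hwpi : w p ≠ w i := fun h => hpi (w.injective h)
        have hiff : w q < w p ↔ w i < w p := by
          rw [hqj]
          constructor
          · intro h
            by_contra h'
            exact htri ⟨h, lt_of_le_of_ne (not_lt.mp h') hwpi⟩
          · intro h; exact hw.trans h
        constructor
        · show w q < w p ↔ w (Equiv.swap i j q) < w (Equiv.swap i j p)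
          rw [hσp, hσq]; exact hiff
        · show w (Equiv.swap i j q) < w (Equiv.swap i j p) ↔ w q < w p
          rw [hσp, hσq]; exact hiff.symm
      · exfalso
        by_cases hpj : p = j
        · have hqi : q ≠ i := fun h => absurd (hij.trans (hpj ▸ hpq)) (by rw [h]; exact lt_irrefl i)
          have hσp : Equiv.swap i j p = i := by rw [hpj]; exact Equiv.swap_apply_right i j
          have hσq : Equiv.swap i j q = q := Equiv.swap_apply_of_ne_of_ne hqi hqj
          rw [hσp, hσq] at hord
          exact hord (hij.trans (hpj ▸ hpq))
        · by_cases hqi : q = i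
          · have hσq : Equiv.swap i j q = j := by rw [hqi]; exact Equiv.swap_apply_left i j
            have hσp : Equiv.swap i j p = p := Equiv.swap_apply_of_ne_of_ne hpi hpj
            rw [hσp, hσq] at hord
            exact hord ((hqi ▸ hpq).trans hij)
          · have hσp : Equiv.swap i j p = p := Equiv.swap_apply_of_ne_of_ne hpi hpj
            have hσq : Equiv.swap i j q = q := Equiv.swap_apply_of_ne_of_ne hqi hqj
            rw [hσp, hσq] at hord
            exact hord hpq

private lemma invCount_cover (w : Equiv.Perm (Fin n)) (i j : Fin n) (hij : i < j)
    (hw : w j < w i)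
    (hmid : ∀ k, i < k → k < j → ¬(w j < w k ∧ w k < w i)) :
    invCount (Equiv.swap (w i) (w j) * w) + 1 = invCount w := by
  classical
  have hw' : Equiv.swap (w i) (w j) * w = w * Equiv.swap i j := by
    rw [Equiv.swap_apply_apply]; group
  rw [hw']
  have hBcount : invCount (w * Equiv.swap i j) =
      ((Finset.univ : Finset (Fin n × Fin n)).filter
        (fun p => p.1 < p.2 ∧ w (Equiv.swap i j p.2) < w (Equiv.swap i j p.1))).card := rfl
  set B := (Finset.univ : Finset (Fin n × Fin n)).filter
      (fun p => p.1 < p.2 ∧ w (Equiv.swap i j p.2) < w (Equiv.swap i j p.1)) with hB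
  set A := (Finset.univ : Finset (Fin n × Fin n)).filter
      (fun p => p.1 < p.2 ∧ w p.2 < w p.1) with hA
  have hAcount : invCount w = A.card := rfl
  have hmem_ij : (i, j) ∈ A := by
    rw [hA, Finset.mem_filter]
    exact ⟨Finset.mem_univ _, hij, hw⟩
  have hcard : (A.erase (i, j)).card = B.card := by
    apply Finset.card_bij' (fun p _ => Gmap i j p) (fun p _ => Gmap i j p)
    · rintro ⟨p1, p2⟩ hp
      obtain ⟨hpne, hpA⟩ := Finset.mem_erase.mp hp
      obtain ⟨-, hlt, hinv⟩ := Finset.mem_filter.mp hpA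
      obtain ⟨hord, -, -, hiff1, -⟩ := Gmap_main w i j hij hw hmid p1 p2 hlt hpne
      rw [hB, Finset.mem_filter]
      exact ⟨Finset.mem_univ _, hord, hiff1.mp hinv⟩
    · rintro ⟨p1, p2⟩ hp
      obtain ⟨-, hlt, hinv⟩ := Finset.mem_filter.mp hp
      have hpne : ((p1, p2) : Fin n × Fin n) ≠ (i, j) := by
        intro hEq
        rw [Prod.mk.injEq] at hEq
        have h1 : w (Equiv.swap i j p2) < w (Equiv.swap i j p1) := hinv
        rw [hEq.1, hEq.2, Equiv.swap_apply_left, Equiv.swap_apply_right] at h1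
        exact lt_asymm hw h1
      obtain ⟨hord, -, hGne, -, hiff2⟩ := Gmap_main w i j hij hw hmid p1 p2 hlt hpne
      rw [Finset.mem_erase]
      exact ⟨hGne, Finset.mem_filter.mpr ⟨Finset.mem_univ _, hord, hiff2.mp hinv⟩⟩
    · rintro ⟨p1, p2⟩ hp
      obtain ⟨hpne, hpA⟩ := Finset.mem_erase.mp hp
      obtain ⟨-, hlt, -⟩ := Finset.mem_filter.mp hpA
      exact (Gmap_main w i j hij hw hmid p1 p2 hlt hpne).2.1
    · rintro ⟨p1, p2⟩ hp
      obtain ⟨-, hlt, hinv⟩ := Finset.mem_filter.mp hp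
      have hpne : ((p1, p2) : Fin n × Fin n) ≠ (i, j) := by
        intro hEq
        rw [Prod.mk.injEq] at hEq
        have h1 : w (Equiv.swap i j p2) < w (Equiv.swap i j p1) := hinv
        rw [hEq.1, hEq.2, Equiv.swap_apply_left, Equiv.swap_apply_right] at h1
        exact lt_asymm hw h1
      exact (Gmap_main w i j hij hw hmid p1 p2 hlt hpne).2.1
  rw [hBcount, hAcount, ← hcard, Finset.card_erase_add_one hmem_ij]

private lemma refSet_cover (w : Equiv.Perm (Fin n)) (i j : Fin n) (hij : i < j)
    (hw : w j < w i) (hmid : ∀ k, i < k → k < j → ¬(w j < w k ∧ w k < w i)) :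
    (w i, w j) ∈ RefSet w :=
  ⟨i, j, hij, rfl, invCount_cover w i j hij hw hmid⟩

private lemma chain_lt (w v : Equiv.Perm (Fin n))
    (hA : ∀ p ∈ RefSet w, v.symm p.1 < v.symm p.2) :
    ∀ m : ℕ, ∀ i j : Fin n, (j : ℕ) - (i : ℕ) ≤ m → i < j → w j < w i →
      v.symm (w i) < v.symm (w j) := by
  intro m
  induction m with
  | zero =>
    intro i j hle hij _
    have := Fin.lt_def.mp hij
    omega
  | succ m ih =>
    intro i j hle hij hw
    by_cases hmid : ∀ k, i < k → k < j → ¬(w j < w k ∧ w k < w i)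
    · exact hA (w i, w j) (refSet_cover w i j hij hw hmid)
    · push_neg at hmid
      obtain ⟨k, hik, hkj, hwjk, hwki⟩ := hmid
      have hik' := Fin.lt_def.mp hik
      have hkj' := Fin.lt_def.mp hkj
      have h1 := ih i k (by omega) hik hwki
      have h2 := ih k j (by omega) hkj hwjk
      exact h1.trans h2

private lemma mem_initSeg {w : Equiv.Perm (Fin n)} {d : ℕ} {x : Fin n} :
    x ∈ initSeg w d ↔ ∃ i : Fin n, (i : ℕ) < d ∧ w i = x := by
  simp [initSeg]

private lemma initSeg_succ (w : Equiv.Perm (Fin n)) (d : Fin n) :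
    initSeg w ((d : ℕ) + 1) = insert (w d) (initSeg w (d : ℕ)) := by
  ext x
  rw [mem_initSeg, Finset.mem_insert, mem_initSeg]
  constructor
  · rintro ⟨i, hi, rfl⟩
    by_cases h : i = d
    · left; rw [h]
    · right
      exact ⟨i, by
        have : (i : ℕ) ≠ (d : ℕ) := fun hv => h (Fin.ext hv)
        omega, rfl⟩
  · rintro (h | ⟨i, hi, rfl⟩)
    · exact ⟨d, by omega, h.symm⟩
    · exact ⟨i, by omega, rfl⟩

private lemma wd_not_mem (w : Equiv.Perm (Fin n)) (d : Fin n) :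
    w d ∉ initSeg w (d : ℕ) := by
  intro h
  obtain ⟨i, hi, he⟩ := mem_initSeg.mp h
  have : i = d := w.injective he
  rw [this] at hi
  omega

end Aux

/-- If `v' ≠ w`, then there are indices `q < p` with `(v(p), v(q)) ∈ Ref(w)`;
consequently `C(v)` is not contained in `{x : x_b ≥ x_a ∀ (a,b) ∈ Ref(w)}`. -/
theorem cone_not_subset_of_greedy_ne {n : ℕ} (w v vp : Equiv.Perm (Fin n))
    (h : GreedyRel w v vp) (hne : vp ≠ w) :
    (∃ q p : Fin n, q < p ∧ (v p, v q) ∈ RefSet w) ∧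
    ¬ (∀ x ∈ coneC v, ∀ a b : Fin n, (a, b) ∈ RefSet w → x a ≤ x b) := by
  classical
  have hmain : ∃ q p : Fin n, q < p ∧ (v p, v q) ∈ RefSet w := by
    by_contra hcon
    push_neg at hcon
    apply hne
    obtain ⟨idx, hvp, hle⟩ := h
    have hA : ∀ p ∈ RefSet w, v.symm p.1 < v.symm p.2 := by
      intro p hp
      obtain ⟨a, b, hab, hpe, -⟩ := id hp
      have hne12 : p.1 ≠ p.2 := by
        rw [hpe]
        exact fun hEq => (ne_of_lt hab) (w.injective hEq)
      have hnee : v.symm p.1 ≠ v.symm p.2 := fun hEq => hne12 (v.symm.injective hEq)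
      rcases lt_or_gt_of_ne hnee with h1 | h1
      · exact h1
      · exfalso
        apply hcon (v.symm p.2) (v.symm p.1) h1
        rw [Equiv.apply_symm_apply, Equiv.apply_symm_apply]
        exact hp
    have hc := chain_lt w v hA n
    have hidx : ∀ N : ℕ, ∀ d : Fin n, (d : ℕ) < N → idx d = v.symm (w d) := by
      intro N
      induction N with
      | zero => intro d hd; exact absurd hd (Nat.not_lt_zero _)
      | succ N IH =>
        intro d hd
        by_cases hdN : (d : ℕ) < N
        · exact IH d hdN
        · have hIH : ∀ e : Fin n, e < d → idx e = v.symm (w e) := by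
            intro e he
            exact IH e (by have := Fin.lt_def.mp he; omega)
          have hset : ((Finset.univ.filter fun e : Fin n => e < d).image fun e => v (idx e))
              = initSeg w (d : ℕ) := by
            apply Finset.ext
            intro x
            rw [Finset.mem_image, mem_initSeg]
            constructor
            · rintro ⟨e, he, rfl⟩
              rw [Finset.mem_filter] at he
              exact ⟨e, Fin.lt_def.mp he.2, by
                rw [hIH e he.2, Equiv.apply_symm_apply]⟩
            · rintro ⟨i0, hi0, rfl⟩
              refine ⟨i0, Finset.mem_filter.mpr ⟨Finset.mem_univ _, Fin.lt_def.mpr hi0⟩, ?_⟩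
              rw [hIH i0 (Fin.lt_def.mpr hi0), Equiv.apply_symm_apply]
          have hmem0 : v.symm (w d) ∈ {i : Fin n |
              (∀ e : Fin n, e < d → idx e ≠ i) ∧
              domLE (insert (v i)
                  ((Finset.univ.filter fun e : Fin n => e < d).image fun e => v (idx e)))
                (initSeg w ((d : ℕ) + 1))} := by
            constructor
            · intro e he hEq
              rw [hIH e he] at hEq
              have h1 : w e = w d := v.symm.injective hEq
              have h2 : e = d := w.injective h1
              rw [h2] at he
              exact lt_irrefl d he
            · rw [Equiv.apply_symm_apply, hset, ← initSeg_succ w d]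
              exact domLE_refl _
          have hlb := (hle d).2 hmem0
          obtain ⟨hneidx, hdom⟩ := (hle d).1
          rw [hset, initSeg_succ w d] at hdom
          have hvnot : v (idx d) ∉ initSeg w (d : ℕ) := by
            intro hmemS
            obtain ⟨e0, he0, hwe⟩ := mem_initSeg.mp hmemS
            have he0d : e0 < d := Fin.lt_def.mpr he0
            have heq2 : idx e0 = idx d := by
              rw [hIH e0 he0d, hwe, Equiv.symm_apply_apply]
            exact hneidx e0 he0d heq2
          have hwd_not := wd_not_mem w d
          have hle_wd : v (idx d) ≤ w d := domLE_insert_le hvnot hwd_not hdom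
          by_cases hEqw : v (idx d) = w d
          · rw [← hEqw, Equiv.symm_apply_apply]
          · exfalso
            have hlt : v (idx d) < w d := lt_of_le_of_ne hle_wd hEqw
            set jj := w.symm (v (idx d)) with hjj
            have hwjj : w jj = v (idx d) := Equiv.apply_symm_apply w _
            have hjjd : d < jj := by
              have h1 : jj ≠ d := fun hEq => hEqw (by rw [← hwjj, hEq])
              have h2 : ¬ (jj : ℕ) < (d : ℕ) := fun hcc =>
                hvnot (mem_initSeg.mpr ⟨jj, hcc, hwjj⟩)
              rw [Fin.lt_def]
              have h3 : (jj : ℕ) ≠ (d : ℕ) := fun hv => h1 (Fin.ext hv)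
              omega
            have hjlt := jj.isLt
            have hcc := hc d jj (by omega) hjjd (by rw [hwjj]; exact hlt)
            rw [hwjj, Equiv.symm_apply_apply] at hcc
            exact absurd hlb (not_le.mpr hcc)
    apply Equiv.ext
    intro x
    have hx := hidx ((x : ℕ) + 1) x (Nat.lt_succ_self _)
    rw [hvp x, hx, Equiv.apply_symm_apply]
  obtain ⟨q, p, hqp, hmemr⟩ := hmain
  refine ⟨⟨q, p, hqp, hmemr⟩, ?_⟩
  intro hsub
  have hx : (fun k : Fin n => ((v.symm k : ℕ) : ℝ)) ∈ coneC v := by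
    intro a b hab
    simp only [Equiv.symm_apply_apply]
    exact_mod_cast hab
  have h2 := hsub _ hx (v p) (v q) hmemr
  simp only [Equiv.symm_apply_apply] at h2
  have h3 : (p : ℕ) ≤ (q : ℕ) := by exact_mod_cast h2
  have h4 := Fin.lt_def.mp hqp
  omega
end SchubertToric
end
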